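/- Let w₁,…,w_n ∈ {0,1}^m be binary strings and d ∈ ℕ. Construct 2m unit-size jobs {A_i, B_i : i ∈ Fin m} and n agents, where agent j's preferred schedule places all jobs of index i before all jobs of index i' whenever i < i', and within index i places A_i before B_i if w_j(i) = 1 and B_i before A_i otherwise. Then there exists a binary string c ∈ {0,1}^m with Hamming distance at most d to every w_j if and only if there exists a schedule τ of the 2m jobs with max_{j=1,…,n} D(τ, σ_j) ≤ 2d, where D(τ,σ) = ∑_i |C_i(τ) − C_i(σ)|. -/
import Mathlib


private lemma aux_ge_two (x y p : ℤ) (h : x < y) :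
    2 ≤ |x - (p + 1)| + |y - p| := by
  have h1 : (p + 1) - x ≤ |x - (p + 1)| := by
    rw [abs_sub_comm]; exact le_abs_self _
  have h2 : y - p ≤ |y - p| := le_abs_self _
  linarith



/-- Absolute-deviation case of the NP-hardness of the max-D rule (reduction from
Closest String with binary alphabet).  There are `2m` unit-size jobs
`A_i = Sum.inl i`, `B_i = Sum.inr i`; agent `j`'s preferred schedule `σs j`
places all jobs of index `i` before all jobs of index `i'` whenever `i < i'`, and
within index `i` places `A_i` before `B_i` iff `w j i = true` (so positions are
`2i` and `2i+1`).  For unit-size jobs the completion time of a job is its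
position plus one, so the absolute deviation of agent `j` is
`D(τ, σs j) = ∑ i, |τ(i) − σs j (i)|`.  Then there is a string `c` within Hamming
distance `d` of every `w j` iff there is a schedule `τ` with
`max_j D(τ, σs j) ≤ 2d`. -/
theorem max_deviation_closest_string_reduction (m n : ℕ)
    (w : Fin n → Fin m → Bool) (d : ℕ)
    (σs : Fin n → ((Fin m ⊕ Fin m) ≃ Fin (2 * m)))
    (hσ : ∀ (j : Fin n) (i : Fin m),
      (w j i = true → (σs j (Sum.inl i) : ℕ) = 2 * (i : ℕ) ∧
        (σs j (Sum.inr i) : ℕ) = 2 * (i : ℕ) + 1) ∧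
      (w j i = false → (σs j (Sum.inr i) : ℕ) = 2 * (i : ℕ) ∧
        (σs j (Sum.inl i) : ℕ) = 2 * (i : ℕ) + 1)) :
    (∃ c : Fin m → Bool,
        ∀ j : Fin n, (Finset.univ.filter (fun i : Fin m => c i ≠ w j i)).card ≤ d)
      ↔ (∃ τ : (Fin m ⊕ Fin m) ≃ Fin (2 * m),
          ∀ j : Fin n,
            ∑ i : Fin m ⊕ Fin m, |((τ i : ℕ) : ℤ) - ((σs j i : ℕ) : ℤ)| ≤ 2 * d) := by
  constructor
  · rintro ⟨c, hc⟩
    have hlt : ∀ (i : Fin m) (b : ℕ), b ≤ 1 → 2 * (i : ℕ) + b < 2 * m := by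
      intro i b hb; have := i.isLt; omega
    set f : Fin m ⊕ Fin m → Fin (2 * m) := fun x =>
      match x with
      | Sum.inl i => ⟨2 * (i : ℕ) + (if c i then 0 else 1), hlt i _ (by split <;> omega)⟩
      | Sum.inr i => ⟨2 * (i : ℕ) + (if c i then 1 else 0), hlt i _ (by split <;> omega)⟩
      with hf
    have hfinj : Function.Injective f := by
      rintro (i | i) (i' | i') h <;>
        have hv := congrArg Fin.val h <;>
        simp only [hf] at hv <;>
        split_ifs at hv with h1 h2
      all_goals
        first
        | (exfalso; omega)
        | (have hi : i = i' := Fin.ext (by omega); subst hi; simp_all)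
        | (have hi : i = i' := Fin.ext (by omega); rw [hi])
    have hbij : Function.Bijective f := by
      rw [Fintype.bijective_iff_injective_and_card]
      exact ⟨hfinj, by simp [two_mul]⟩
    refine ⟨Equiv.ofBijective f hbij, ?_⟩
    intro j
    rw [Fintype.sum_sum_type, ← Finset.sum_add_distrib]
    have hle : ∀ i : Fin m,
        |((Equiv.ofBijective f hbij (Sum.inl i) : ℕ) : ℤ) - ((σs j (Sum.inl i) : ℕ) : ℤ)| +
          |((Equiv.ofBijective f hbij (Sum.inr i) : ℕ) : ℤ) - ((σs j (Sum.inr i) : ℕ) : ℤ)|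
          ≤ if c i ≠ w j i then 2 else 0 := by
      intro i
      have hA : ((Equiv.ofBijective f hbij) (Sum.inl i) : ℕ)
          = 2 * (i : ℕ) + (if c i then 0 else 1) := rfl
      have hB : ((Equiv.ofBijective f hbij) (Sum.inr i) : ℕ)
          = 2 * (i : ℕ) + (if c i then 1 else 0) := rfl
      rcases hw : w j i with _ | _
      · obtain ⟨hσB, hσA⟩ := (hσ j i).2 hw
        rcases hci : c i with _ | _
        · simp only [hA, hB, hσA, hσB, hci, hw, if_neg, ne_eq]
          norm_num
        · simp only [hA, hB, hσA, hσB, hci, hw, ne_eq]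
          push_cast
          rw [show (2 * (i : ℤ) + 0) - (2 * (i : ℤ) + 1) = -1 by ring,
            show (2 * (i : ℤ) + 1) - (2 * (i : ℤ)) = 1 by ring]
          norm_num
      · obtain ⟨hσA, hσB⟩ := (hσ j i).1 hw
        rcases hci : c i with _ | _
        · simp only [hA, hB, hσA, hσB, hci, hw, ne_eq]
          push_cast
          rw [show (2 * (i : ℤ) + 1) - (2 * (i : ℤ)) = 1 by ring,
            show (2 * (i : ℤ) + 0) - (2 * (i : ℤ) + 1) = -1 by ring]
          norm_num
        · simp only [hA, hB, hσA, hσB, hci, hw, ne_eq]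
          norm_num
    calc ∑ i : Fin m, _ ≤ ∑ i : Fin m, (if c i ≠ w j i then (2 : ℤ) else 0) :=
          Finset.sum_le_sum (fun i _ => hle i)
      _ = 2 * ((Finset.univ.filter (fun i : Fin m => c i ≠ w j i)).card : ℤ) := by
          rw [Finset.sum_ite, Finset.sum_const, Finset.sum_const]
          simp [mul_comm]
      _ ≤ 2 * (d : ℤ) := by
          have := hc j
          have : ((Finset.univ.filter (fun i : Fin m => c i ≠ w j i)).card : ℤ) ≤ d := by
            exact_mod_cast this
          linarith
  · rintro ⟨τ, hτ⟩
    refine ⟨fun i => decide ((τ (Sum.inl i) : ℕ) < (τ (Sum.inr i) : ℕ)), ?_⟩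
    intro j
    have hD := hτ j
    rw [Fintype.sum_sum_type, ← Finset.sum_add_distrib] at hD
    have hne : ∀ i : Fin m, (τ (Sum.inl i) : ℕ) ≠ (τ (Sum.inr i) : ℕ) := by
      intro i h
      exact absurd (τ.injective (Fin.ext h)) (by simp)
    have hge : ∀ i : Fin m,
        (if (decide ((τ (Sum.inl i) : ℕ) < (τ (Sum.inr i) : ℕ))) ≠ w j i then (2 : ℤ) else 0)
          ≤ |((τ (Sum.inl i) : ℕ) : ℤ) - ((σs j (Sum.inl i) : ℕ) : ℤ)| +
            |((τ (Sum.inr i) : ℕ) : ℤ) - ((σs j (Sum.inr i) : ℕ) : ℤ)| := by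
      intro i
      split_ifs with hmis
      · rcases hw : w j i with _ | _
        · rw [hw] at hmis
          have hlt : (τ (Sum.inl i) : ℕ) < (τ (Sum.inr i) : ℕ) := by
            by_contra hcon
            simp [hcon] at hmis
          obtain ⟨hσB, hσA⟩ := (hσ j i).2 hw
          rw [hσA, hσB]
          push_cast
          have := aux_ge_two ((τ (Sum.inl i) : ℕ) : ℤ) ((τ (Sum.inr i) : ℕ) : ℤ)
            (2 * (i : ℤ)) (by exact_mod_cast hlt)
          linarith [this]
        · rw [hw] at hmis
          have hlt : (τ (Sum.inr i) : ℕ) < (τ (Sum.inl i) : ℕ) := by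
            have h1 := hne i
            by_contra hcon
            have h2 : (τ (Sum.inl i) : ℕ) < (τ (Sum.inr i) : ℕ) := by omega
            simp [h2] at hmis
          obtain ⟨hσA, hσB⟩ := (hσ j i).1 hw
          rw [hσA, hσB]
          push_cast
          have := aux_ge_two ((τ (Sum.inr i) : ℕ) : ℤ) ((τ (Sum.inl i) : ℕ) : ℤ)
            (2 * (i : ℤ)) (by exact_mod_cast hlt)
          linarith [this]
      · positivity
    have hsum : (2 : ℤ) * ((Finset.univ.filter
        (fun i : Fin m => (decide ((τ (Sum.inl i) : ℕ) < (τ (Sum.inr i) : ℕ))) ≠ w j i)).card : ℤ)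
        ≤ 2 * d := by
      calc (2 : ℤ) * _ = ∑ i : Fin m, (if (decide ((τ (Sum.inl i) : ℕ) < (τ (Sum.inr i) : ℕ))) ≠ w j i then (2 : ℤ) else 0) := by
            rw [Finset.sum_ite, Finset.sum_const, Finset.sum_const]
            simp [mul_comm]
        _ ≤ _ := Finset.sum_le_sum (fun i _ => hge i)
        _ ≤ 2 * d := hD
    have : ((Finset.univ.filter
        (fun i : Fin m => (decide ((τ (Sum.inl i) : ℕ) < (τ (Sum.inr i) : ℕ))) ≠ w j i)).card : ℤ) ≤ d := by
      linarith
    exact_mod_cast this
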